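/- The sequence m_n := C(2n,n)/4^n satisfies the nonlinear recurrence m_n = Σ_{k=0}^{n-1} m_{n-k-1} (m_k - m_{k+1}) for all n ≥ 1. -/

import Mathlib

open Finset

private lemma double_aux (m : ℕ → ℚ) (N : ℕ) (c : ℚ) :
    2 * ∑ k ∈ Finset.range (N + 1), ((k : ℚ) + c) * (m k * m (N - k)) =
      ((N : ℚ) + 2 * c) * ∑ k ∈ Finset.range (N + 1), m k * m (N - k) := by
  have h1 := Finset.sum_range_reflect (fun j => ((j : ℚ) + c) * (m j * m (N - j))) (N + 1)
  have h1' : ∑ j ∈ Finset.range (N + 1), (((N : ℚ) - j) + c) * (m j * m (N - j)) =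
      ∑ j ∈ Finset.range (N + 1), ((j : ℚ) + c) * (m j * m (N - j)) := by
    rw [← h1]
    apply Finset.sum_congr rfl
    intro j hj
    simp only [Finset.mem_range] at hj
    have e1 : N + 1 - 1 - j = N - j := by omega
    have e2 : N - (N - j) = j := by omega
    rw [e1, e2, Nat.cast_sub (by omega : j ≤ N)]
    ring
  calc 2 * ∑ k ∈ Finset.range (N + 1), ((k : ℚ) + c) * (m k * m (N - k))
      = ∑ k ∈ Finset.range (N + 1),
          (((k : ℚ) + c) * (m k * m (N - k)) + (((N : ℚ) - k) + c) * (m k * m (N - k))) := by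
        rw [Finset.sum_add_distrib, h1', two_mul]
    _ = ∑ k ∈ Finset.range (N + 1), ((N : ℚ) + 2 * c) * (m k * m (N - k)) :=
        Finset.sum_congr rfl (fun k _ => by ring)
    _ = ((N : ℚ) + 2 * c) * ∑ k ∈ Finset.range (N + 1), m k * m (N - k) := by
        rw [← Finset.mul_sum]

private lemma conv_aux (m : ℕ → ℚ) (hm : ∀ j : ℕ, m j = ((2 * j).choose j : ℚ) / 4 ^ j) :
    ∀ n : ℕ, ∑ k ∈ Finset.range (n + 1), m k * m (n - k) = 1 := by
  have key : ∀ i : ℕ, 2 * ((i : ℚ) + 1) * m (i + 1) = (2 * i + 1) * m i := by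
    intro i
    have h := Nat.succ_mul_centralBinom_succ i
    simp only [Nat.centralBinom] at h
    have h' : ((i : ℚ) + 1) * ((2 * (i + 1)).choose (i + 1) : ℚ)
        = 2 * (2 * i + 1) * ((2 * i).choose i : ℚ) := by exact_mod_cast h
    rw [hm, hm, pow_succ]
    have h4 : (4 : ℚ) ^ i ≠ 0 := by positivity
    field_simp
    linear_combination (2 : ℚ) * h'
  intro n
  induction n with
  | zero => simp [hm]
  | succ n ih =>
    have hA := double_aux m (n + 1) 0
    have hB := double_aux m n (1 / 2)
    have hAB : ∑ k ∈ Finset.range (n + 1 + 1), ((k : ℚ) + 0) * (m k * m (n + 1 - k)) =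
        ∑ j ∈ Finset.range (n + 1), ((j : ℚ) + 1 / 2) * (m j * m (n - j)) := by
      rw [Finset.sum_range_succ']
      simp only [Nat.cast_zero, zero_add, add_zero]
      have : ∀ i ∈ Finset.range (n + 1),
          (((i + 1 : ℕ) : ℚ)) * (m (i + 1) * m (n + 1 - (i + 1))) =
            ((i : ℚ) + 1 / 2) * (m i * m (n - i)) := by
        intro i _
        have e : n + 1 - (i + 1) = n - i := by omega
        rw [e]
        push_cast
        linear_combination (m (n - i) / 2) * key i
      rw [Finset.sum_congr rfl this]
      simp [hm]
    rw [ih] at hB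
    have hpos : ((n : ℚ) + 1) ≠ 0 := by positivity
    have hS : ((n : ℚ) + 1) * (∑ k ∈ Finset.range (n + 1 + 1), m k * m (n + 1 - k))
        = ((n : ℚ) + 1) * 1 := by
      calc ((n : ℚ) + 1) * (∑ k ∈ Finset.range (n + 1 + 1), m k * m (n + 1 - k))
          = ((n + 1 : ℕ) + 2 * 0 : ℚ) * (∑ k ∈ Finset.range (n + 1 + 1), m k * m (n + 1 - k)) := by
            push_cast; ring
        _ = 2 * ∑ k ∈ Finset.range (n + 1 + 1), ((k : ℚ) + 0) * (m k * m (n + 1 - k)) := hA.symm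
        _ = 2 * ∑ j ∈ Finset.range (n + 1), ((j : ℚ) + 1 / 2) * (m j * m (n - j)) := by rw [hAB]
        _ = ((n : ℚ) + 2 * (1 / 2)) * 1 := hB
        _ = ((n : ℚ) + 1) * 1 := by ring
    exact mul_left_cancel₀ hpos hS

/-- The sequence `m n = C(2n,n)/4^n` satisfies the nonlinear recurrence
`m n = ∑_{k=0}^{n-1} m (n-k-1) * (m k - m (k+1))` for all `n ≥ 1`. -/
theorem stmt1 (m : ℕ → ℚ) (hm : ∀ j : ℕ, m j = ((2 * j).choose j : ℚ) / 4 ^ j) :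
    ∀ n : ℕ, 1 ≤ n →
      m n = ∑ k ∈ Finset.range n, m (n - k - 1) * (m k - m (k + 1)) := by
  intro n hn
  obtain ⟨N, rfl⟩ : ∃ N, n = N + 1 := ⟨n - 1, by omega⟩
  have hsub : ∀ k : ℕ, N + 1 - k - 1 = N - k := fun k => by omega
  simp only [hsub]
  have h1 : ∑ k ∈ Finset.range (N + 1), m (N - k) * (m k - m (k + 1)) =
      (∑ k ∈ Finset.range (N + 1), m k * m (N - k)) -
        ∑ k ∈ Finset.range (N + 1), m (k + 1) * m (N - k) := by
    rw [← Finset.sum_sub_distrib]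
    exact Finset.sum_congr rfl (fun k _ => by ring)
  have h2 := conv_aux m hm N
  have h3 := conv_aux m hm (N + 1)
  rw [Finset.sum_range_succ'] at h3
  have h4 : ∀ i ∈ Finset.range (N + 1),
      m (i + 1) * m (N + 1 - (i + 1)) = m (i + 1) * m (N - i) := by
    intro i _
    congr 2
    omega
  rw [Finset.sum_congr rfl h4] at h3
  have hm0 : m 0 = 1 := by simp [hm]
  simp only [Nat.sub_zero, hm0, one_mul] at h3
  rw [h1, h2]
  linarith [h3]
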